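/- Let δ, p, q, p* be real numbers with 0<δ<1 and 2≤p<q<p*, and let K_a>0, K_b>0 be real constants. Define A₁=((p*−1+δ)·K_a/(p*−p))^{p/(p−1+δ)}, A₂=((p*−1+δ)·K_a)^{p/(p−1+δ)}/((p*−q)·(p*−p)^{(1−δ)/(p−1+δ)}), D₂=A₁+A₂, and Λ*=(p−1+δ)/((p*−1+δ)·K_b·D₂^{(p*−p)/p}). Then Λ*>0 and for every λ with 0<λ<Λ*: (i) every pair of reals X>0, Y≥0 with (p*−p)·X+(p*−q)·Y < (p*−1+δ)·K_a·X^{(1−δ)/p} satisfies X+Y < D₂; (ii) every pair of reals X′>0, Y′≥0 with (p−1+δ)·X′+(q−1+δ)·Y′ < λ·(p*−1+δ)·K_b·X′^{p*/p} satisfies X′ > ((p−1+δ)/(λ(p*−1+δ)K_b))^{p/(p*−p)} > D₂; in particular X′ > X+Y for all such pairs. -/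

import Mathlib

private lemma aux1 {x M a : ℝ} (hx : 0 ≤ x) (ha : 0 < a) (h : x ^ a < M) :
    x < M ^ a⁻¹ := by
  have := Real.rpow_lt_rpow (Real.rpow_nonneg hx a) h (inv_pos.mpr ha)
  rwa [← Real.rpow_mul hx, mul_inv_cancel₀ ha.ne', Real.rpow_one] at this

private lemma aux2 {x M a : ℝ} (hx : 0 ≤ x) (hM : 0 ≤ M) (ha : 0 < a)
    (h : M < x ^ a) : M ^ a⁻¹ < x := by
  have := Real.rpow_lt_rpow hM h (inv_pos.mpr ha)
  rwa [← Real.rpow_mul hx, mul_inv_cancel₀ ha.ne', Real.rpow_one] at this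

/-- the arithmetic form of the gap-structure proposition in the
critical case `α+1 = p*`: with
`A₁ = ((p*−1+δ)·K_a/(p*−p))^{p/(p−1+δ)}`,
`A₂ = ((p*−1+δ)·K_a)^{p/(p−1+δ)}/((p*−q)·(p*−p)^{(1−δ)/(p−1+δ)})`,
`D₂ = A₁+A₂` and `Λ* = (p−1+δ)/((p*−1+δ)·K_b·D₂^{(p*−p)/p})`, one has
`Λ* > 0` and for every `0 < λ < Λ*`: (i) any `X > 0`, `Y ≥ 0` with
`(p*−p)X+(p*−q)Y < (p*−1+δ)K_a X^{(1−δ)/p}` satisfy `X+Y < D₂`;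
(ii) any `X′ > 0`, `Y′ ≥ 0` with
`(p−1+δ)X′+(q−1+δ)Y′ < λ(p*−1+δ)K_b X′^{p*/p}` satisfy
`X′ > ((p−1+δ)/(λ(p*−1+δ)K_b))^{p/(p*−p)} > D₂`; in particular
`X′ > X+Y` for all such pairs. -/
theorem statement11
    (δ p q ps Ka Kb A₁ A₂ D₂ Λstar : ℝ)
    (hδ0 : 0 < δ) (hδ1 : δ < 1)
    (hp : 2 ≤ p) (hpq : p < q) (hq : q < ps)
    (hKa : 0 < Ka) (hKb : 0 < Kb)
    (hA₁ : A₁ = ((ps - 1 + δ) * Ka / (ps - p)) ^ (p / (p - 1 + δ)))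
    (hA₂ : A₂ = ((ps - 1 + δ) * Ka) ^ (p / (p - 1 + δ))
        / ((ps - q) * (ps - p) ^ ((1 - δ) / (p - 1 + δ))))
    (hD₂ : D₂ = A₁ + A₂)
    (hΛ : Λstar = (p - 1 + δ) / ((ps - 1 + δ) * Kb * D₂ ^ ((ps - p) / p))) :
    0 < Λstar ∧
    ∀ lam : ℝ, 0 < lam → lam < Λstar →
      (∀ X Y : ℝ, 0 < X → 0 ≤ Y →
        (ps - p) * X + (ps - q) * Y < (ps - 1 + δ) * Ka * X ^ ((1 - δ) / p) →
        X + Y < D₂) ∧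
      (∀ X' Y' : ℝ, 0 < X' → 0 ≤ Y' →
        (p - 1 + δ) * X' + (q - 1 + δ) * Y'
            < lam * (ps - 1 + δ) * Kb * X' ^ (ps / p) →
        ((p - 1 + δ) / (lam * (ps - 1 + δ) * Kb)) ^ (p / (ps - p)) < X' ∧
        D₂ < ((p - 1 + δ) / (lam * (ps - 1 + δ) * Kb)) ^ (p / (ps - p))) ∧
      (∀ X Y X' Y' : ℝ, 0 < X → 0 ≤ Y → 0 < X' → 0 ≤ Y' →
        (ps - p) * X + (ps - q) * Y < (ps - 1 + δ) * Ka * X ^ ((1 - δ) / p) →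
        (p - 1 + δ) * X' + (q - 1 + δ) * Y'
            < lam * (ps - 1 + δ) * Kb * X' ^ (ps / p) →
        X + Y < X') := by
  have hp0 : (0:ℝ) < p := by linarith
  have hs : 0 < p - 1 + δ := by linarith
  have hpsp : 0 < ps - p := by linarith
  have hpsq : 0 < ps - q := by linarith
  have hps1 : 0 < ps - 1 + δ := by linarith
  have hC : 0 < (ps - 1 + δ) * Ka := mul_pos hps1 hKa
  have hA₁pos : 0 < A₁ := by
    rw [hA₁]; exact Real.rpow_pos_of_pos (div_pos hC hpsp) _
  have hA₂pos : 0 < A₂ := by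
    rw [hA₂]
    exact div_pos (Real.rpow_pos_of_pos hC _)
      (mul_pos hpsq (Real.rpow_pos_of_pos hpsp _))
  have hD₂pos : 0 < D₂ := by rw [hD₂]; linarith
  have hΛpos : 0 < Λstar := by
    rw [hΛ]
    exact div_pos hs (mul_pos (mul_pos hps1 hKb) (Real.rpow_pos_of_pos hD₂pos _))
  -- Part (i)
  have key1 : ∀ X Y : ℝ, 0 < X → 0 ≤ Y →
      (ps - p) * X + (ps - q) * Y < (ps - 1 + δ) * Ka * X ^ ((1 - δ) / p) →
      X + Y < D₂ := by
    intro X Y hX hY hlt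
    have hXe : (0:ℝ) < X ^ ((1 - δ) / p) := Real.rpow_pos_of_pos hX _
    have h1 : (ps - p) * X < (ps - 1 + δ) * Ka * X ^ ((1 - δ) / p) := by
      nlinarith [mul_nonneg hpsq.le hY]
    have hXsplit : X = X ^ ((p - 1 + δ) / p) * X ^ ((1 - δ) / p) := by
      rw [← Real.rpow_add hX,
        show (p - 1 + δ) / p + (1 - δ) / p = 1 by field_simp; ring, Real.rpow_one]
    have h2 : (ps - p) * X ^ ((p - 1 + δ) / p) < (ps - 1 + δ) * Ka := by
      nth_rewrite 1 [hXsplit] at h1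
      rw [← mul_assoc] at h1
      exact lt_of_mul_lt_mul_right h1 hXe.le
    have h3 : X ^ ((p - 1 + δ) / p) < (ps - 1 + δ) * Ka / (ps - p) := by
      rw [lt_div_iff₀ hpsp]; linarith [h2, mul_comm (X ^ ((p - 1 + δ) / p)) (ps - p)]
    have h4 : X < A₁ := by
      rw [hA₁]
      have := aux1 hX.le (div_pos hs hp0) h3
      rwa [inv_div] at this
    have h5 : X ^ ((1 - δ) / p)
        < ((ps - 1 + δ) * Ka / (ps - p)) ^ ((1 - δ) / (p - 1 + δ)) := by
      have := Real.rpow_lt_rpow (Real.rpow_nonneg hX.le _) h3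
        (show (0:ℝ) < (1 - δ) / (p - 1 + δ) from div_pos (by linarith) hs)
      rwa [← Real.rpow_mul hX.le,
        show (p - 1 + δ) / p * ((1 - δ) / (p - 1 + δ)) = (1 - δ) / p by
          field_simp] at this
    have h6 : (ps - q) * Y < (ps - 1 + δ) * Ka *
        (((ps - 1 + δ) * Ka / (ps - p)) ^ ((1 - δ) / (p - 1 + δ))) := by
      calc (ps - q) * Y ≤ (ps - p) * X + (ps - q) * Y := by nlinarith
        _ < (ps - 1 + δ) * Ka * X ^ ((1 - δ) / p) := hlt
        _ < _ := mul_lt_mul_of_pos_left h5 hC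
    have h7 : Y < A₂ := by
      rw [hA₂]
      have hA₂eq : ((ps - 1 + δ) * Ka) ^ (p / (p - 1 + δ))
          / ((ps - q) * (ps - p) ^ ((1 - δ) / (p - 1 + δ)))
          = (ps - 1 + δ) * Ka *
            (((ps - 1 + δ) * Ka / (ps - p)) ^ ((1 - δ) / (p - 1 + δ)))
            / (ps - q) := by
        rw [Real.div_rpow hC.le hpsp.le,
          show p / (p - 1 + δ) = 1 + (1 - δ) / (p - 1 + δ) by field_simp; ring,
          Real.rpow_add hC, Real.rpow_one]
        field_simp
      rw [hA₂eq, lt_div_iff₀ hpsq, mul_comm]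
      exact h6
    rw [hD₂]
    exact add_lt_add h4 h7
  -- Part (ii)
  have key2 : ∀ lam : ℝ, 0 < lam → lam < Λstar → ∀ X' Y' : ℝ, 0 < X' → 0 ≤ Y' →
      (p - 1 + δ) * X' + (q - 1 + δ) * Y'
          < lam * (ps - 1 + δ) * Kb * X' ^ (ps / p) →
      ((p - 1 + δ) / (lam * (ps - 1 + δ) * Kb)) ^ (p / (ps - p)) < X' ∧
      D₂ < ((p - 1 + δ) / (lam * (ps - 1 + δ) * Kb)) ^ (p / (ps - p)) := by
    intro lam hlam hlamΛ X' Y' hX' hY' hlt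
    have hK : 0 < lam * (ps - 1 + δ) * Kb := by positivity
    have hR : 0 < (p - 1 + δ) / (lam * (ps - 1 + δ) * Kb) := div_pos hs hK
    have h1 : (p - 1 + δ) * X' < lam * (ps - 1 + δ) * Kb * X' ^ (ps / p) := by
      nlinarith [mul_nonneg (show (0:ℝ) ≤ q - 1 + δ by linarith) hY']
    have hsplit : X' ^ (ps / p) = X' * X' ^ ((ps - p) / p) := by
      rw [show ps / p = 1 + (ps - p) / p by field_simp; ring, Real.rpow_add hX',
        Real.rpow_one]
    have h2 : (p - 1 + δ) < lam * (ps - 1 + δ) * Kb * X' ^ ((ps - p) / p) := by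
      rw [hsplit] at h1
      have heq : lam * (ps - 1 + δ) * Kb * (X' * X' ^ ((ps - p) / p))
          = (lam * (ps - 1 + δ) * Kb * X' ^ ((ps - p) / p)) * X' := by ring
      rw [heq] at h1
      exact lt_of_mul_lt_mul_right h1 hX'.le
    have h3 : (p - 1 + δ) / (lam * (ps - 1 + δ) * Kb) < X' ^ ((ps - p) / p) := by
      rw [div_lt_iff₀ hK]
      have heq : X' ^ ((ps - p) / p) * (lam * (ps - 1 + δ) * Kb)
          = lam * (ps - 1 + δ) * Kb * X' ^ ((ps - p) / p) := by ring
      rw [heq]; exact h2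
    have h4 : ((p - 1 + δ) / (lam * (ps - 1 + δ) * Kb)) ^ (p / (ps - p)) < X' := by
      have := aux2 hX'.le hR.le (div_pos hpsp hp0) h3
      rwa [inv_div] at this
    refine ⟨h4, ?_⟩
    have hden : 0 < (ps - 1 + δ) * Kb * D₂ ^ ((ps - p) / p) :=
      mul_pos (mul_pos hps1 hKb) (Real.rpow_pos_of_pos hD₂pos _)
    rw [hΛ] at hlamΛ
    have hlam2 : lam * ((ps - 1 + δ) * Kb * D₂ ^ ((ps - p) / p)) < p - 1 + δ :=
      (lt_div_iff₀ hden).mp hlamΛ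
    have h5 : D₂ ^ ((ps - p) / p) < (p - 1 + δ) / (lam * (ps - 1 + δ) * Kb) := by
      rw [lt_div_iff₀ hK]
      have heq : D₂ ^ ((ps - p) / p) * (lam * (ps - 1 + δ) * Kb)
          = lam * ((ps - 1 + δ) * Kb * D₂ ^ ((ps - p) / p)) := by ring
      rw [heq]; exact hlam2
    have h6 := aux1 hD₂pos.le (div_pos hpsp hp0) h5
    rwa [inv_div] at h6
  refine ⟨hΛpos, fun lam hlam hlamΛ => ⟨fun X Y hX hY h => key1 X Y hX hY h,
    key2 lam hlam hlamΛ, fun X Y X' Y' hX hY hX' hY' h h' => ?_⟩⟩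
  have hXY := key1 X Y hX hY h
  obtain ⟨hT, hDT⟩ := key2 lam hlam hlamΛ X' Y' hX' hY' h'
  linarith
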